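/- With the notation of the previous statement (tree T ⊆ 𝒮 = ℕ^{<ℕ}, vectors a_s, b_s ∈ ℓ¹(𝒮), and W_T the closed span of {a_s ⊕ b_s : s ∈ T}): W_T ∩ (ℓ¹(𝒮) ⊕ {0}) ≠ {0} if and only if T is ill-founded, i.e. there exists α ∈ ℕ^ℕ with (α_1, …, α_n) ∈ T for all n ∈ ℕ. -/

import Mathlib

/-- `δ_t ∈ ℓ¹(ℕ^{<ℕ})`, the indicator of the singleton `{t}`. -/
noncomputable def deltaVec (t : List ℕ) : lp (fun _ : List ℕ => ℝ) 1 := lp.single 1 t 1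

/-- `a_s = ∑_{t ⪯ s} 2^{-|t|} δ_t`. -/
noncomputable def aVec (s : List ℕ) : lp (fun _ : List ℕ => ℝ) 1 :=
  ∑ t ∈ s.inits.toFinset, (2 : ℝ) ^ (-(t.length : ℤ)) • deltaVec t

/-- `b_s = 2^{-|s|} δ_s`. -/
noncomputable def bVec (s : List ℕ) : lp (fun _ : List ℕ => ℝ) 1 :=
  (2 : ℝ) ^ (-(s.length : ℤ)) • deltaVec s

lemma deltaVec_apply (t u : List ℕ) : deltaVec t u = if u = t then 1 else 0 := by
  by_cases h : u = t
  · simp [deltaVec, h, lp.single_apply_self]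
  · simp [deltaVec, h, lp.single_apply_ne _ _ _ h]

lemma aVec_apply (s u : List ℕ) :
    aVec s u = if u <+: s then (2 : ℝ) ^ (-(u.length : ℤ)) else 0 := by
  have : aVec s u = ∑ t ∈ s.inits.toFinset,
      ((2 : ℝ) ^ (-(t.length : ℤ)) • deltaVec t) u := by
    rw [aVec, lp.coeFn_sum, Finset.sum_apply]
  rw [this]
  have h2 : ∀ t ∈ s.inits.toFinset,
      ((2 : ℝ) ^ (-(t.length : ℤ)) • deltaVec t) u
        = if t = u then (2 : ℝ) ^ (-(u.length : ℤ)) else 0 := by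
    intro t _
    rw [lp.coeFn_smul, Pi.smul_apply, deltaVec_apply]
    by_cases h : t = u
    · simp [h]
    · simp [h, Ne.symm h]
  rw [Finset.sum_congr rfl h2, Finset.sum_ite_eq']
  simp [List.mem_inits]

lemma bVec_apply (s u : List ℕ) :
    bVec s u = if u = s then (2 : ℝ) ^ (-(s.length : ℤ)) else 0 := by
  rw [bVec, lp.coeFn_smul, Pi.smul_apply, deltaVec_apply]
  by_cases h : u = s <;> simp [h]

noncomputable abbrev L1S := lp (fun _ : List ℕ => ℝ) 1

lemma summable_norm_l1 (f : L1S) : Summable fun u => ‖f u‖ := by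
  have := (lp.memℓp f).summable (by norm_num : (0:ℝ) < (1 : ENNReal).toReal)
  simpa using this

lemma hasSum_norm_l1 (f : L1S) : HasSum (fun u => ‖f u‖) ‖f‖ := by
  have := lp.hasSum_norm (by norm_num : (0:ℝ) < (1 : ENNReal).toReal) f
  simpa using this

lemma snoc_injective (t : List ℕ) : Function.Injective (fun n => t ++ [n]) := by
  intro a b h
  simpa using h

lemma summable_child (f : L1S) (t : List ℕ) : Summable fun n : ℕ => f (t ++ [n]) := by
  refine Summable.of_norm ?_
  exact (summable_norm_l1 f).comp_injective (snoc_injective t)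

lemma tsum_child_le (f : L1S) (t : List ℕ) : |∑' n : ℕ, f (t ++ [n])| ≤ ‖f‖ := by
  have hs : Summable fun n : ℕ => ‖f (t ++ [n])‖ :=
    (summable_norm_l1 f).comp_injective (snoc_injective t)
  calc |∑' n : ℕ, f (t ++ [n])| ≤ ∑' n : ℕ, ‖f (t ++ [n])‖ := by
        simpa [Real.norm_eq_abs] using norm_tsum_le_tsum_norm hs
    _ ≤ ∑' u, ‖f u‖ := by
        refine hs.tsum_le_tsum_of_inj (fun n => t ++ [n]) (snoc_injective t)
          (fun c _ => norm_nonneg _) (fun n => le_rfl)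
          (summable_norm_l1 f)
    _ = ‖f‖ := (hasSum_norm_l1 f).tsum_eq

noncomputable def evalCLM (t : List ℕ) : L1S →L[ℝ] ℝ :=
  LinearMap.mkContinuous
    { toFun := fun f => f t
      map_add' := fun f g => by simp [lp.coeFn_add]
      map_smul' := fun c f => by simp [lp.coeFn_smul] }
    1 (fun f => by rw [one_mul]; exact lp.norm_apply_le_norm one_ne_zero f t)

@[simp] lemma evalCLM_apply (t : List ℕ) (f : L1S) : evalCLM t f = f t := rfl

noncomputable def childCLM (t : List ℕ) : L1S →L[ℝ] ℝ :=
  LinearMap.mkContinuous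
    { toFun := fun f => ∑' n : ℕ, f (t ++ [n])
      map_add' := fun f g => by
        rw [← (summable_child f t).tsum_add (summable_child g t)]
        exact tsum_congr fun n => by simp [lp.coeFn_add]
      map_smul' := fun c f => by
        rw [RingHom.id_apply, ← tsum_const_smul'' c]
        exact tsum_congr fun n => by simp [lp.coeFn_smul] }
    1 (fun f => by simpa [Real.norm_eq_abs] using tsum_child_le f t)

@[simp] lemma childCLM_apply (t : List ℕ) (f : L1S) :
    childCLM t f = ∑' n : ℕ, f (t ++ [n]) := rfl

lemma exists_unique_snoc_prefix {t s : List ℕ} (h1 : t <+: s) (h2 : t ≠ s) :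
    ∃ n0 : ℕ, (t ++ [n0] <+: s) ∧ ∀ m : ℕ, t ++ [m] <+: s → m = n0 := by
  obtain ⟨d, hd⟩ := h1
  match d, hd with
  | [], hd => exact absurd (by simpa using hd) h2
  | n0 :: d', hd =>
    refine ⟨n0, ⟨d', by simpa using hd⟩, fun m hm => ?_⟩
    have h0 : t ++ [n0] <+: s := ⟨d', by simpa using hd⟩
    have := List.prefix_of_prefix_length_le hm h0 (by simp)
    have := this.eq_of_length (by simp)
    simpa using this

lemma gen_identity (s t : List ℕ) :
    aVec s t - bVec s t = 2 * ∑' n : ℕ, (aVec s) (t ++ [n]) := by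
  by_cases h1 : t <+: s
  · by_cases h2 : t = s
    · subst h2
      have hz : ∀ n : ℕ, (aVec t) (t ++ [n]) = 0 := by
        intro n
        rw [aVec_apply, if_neg]
        intro h
        have := h.length_le
        simp at this
      rw [tsum_congr hz, tsum_zero, aVec_apply, bVec_apply, if_pos List.prefix_rfl, if_pos rfl]
      ring
    · obtain ⟨n0, hn0, hu⟩ := exists_unique_snoc_prefix h1 h2
      have ht : ∑' n : ℕ, (aVec s) (t ++ [n]) = (2 : ℝ) ^ (-(t.length + 1 : ℤ)) := by
        rw [tsum_eq_single n0]
        · rw [aVec_apply, if_pos hn0]; simp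
        · intro m hm
          rw [aVec_apply, if_neg]
          intro h
          exact hm (hu m h)
      rw [ht, aVec_apply, bVec_apply, if_pos h1, if_neg h2]
      rw [show (-(t.length + 1 : ℤ)) = (-(t.length:ℤ)) + (-1) by ring, zpow_add₀ (by norm_num : (2:ℝ) ≠ 0)]
      ring
  · have hz : ∀ n : ℕ, (aVec s) (t ++ [n]) = 0 := by
      intro n
      rw [aVec_apply, if_neg]
      exact fun h => h1 ((List.prefix_append t [n]).trans h)
    rw [tsum_congr hz, tsum_zero, aVec_apply, bVec_apply, if_neg h1, if_neg]
    · ring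
    · rintro rfl; exact h1 List.prefix_rfl

/-- `W_T`, the closed linear span of `{a_s ⊕ b_s : s ∈ T}` in `ℓ¹ ⊕ ℓ¹`. -/
noncomputable def Wspace (T : Set (List ℕ)) :
    Set ((lp (fun _ : List ℕ => ℝ) 1) × (lp (fun _ : List ℕ => ℝ) 1)) :=
  closure ((Submodule.span ℝ ((fun s => (aVec s, bVec s)) '' T) : Submodule ℝ _) : Set _)

lemma vanish_on_W (T : Set (List ℕ)) (φ : (L1S × L1S) →L[ℝ] ℝ)
    (h : ∀ s ∈ T, φ (aVec s, bVec s) = 0) : ∀ x ∈ Wspace T, φ x = 0 := by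
  intro x hx
  have hspan : Submodule.span ℝ ((fun s => (aVec s, bVec s)) '' T) ≤ LinearMap.ker (φ : (L1S × L1S) →ₗ[ℝ] ℝ) := by
    rw [Submodule.span_le]
    rintro _ ⟨s, hs, rfl⟩
    exact h s hs
  have hcl : Wspace T ⊆ (LinearMap.ker (φ : (L1S × L1S) →ₗ[ℝ] ℝ) : Set (L1S × L1S)) :=
    closure_minimal hspan (ContinuousLinearMap.isClosed_ker φ)
  exact hcl hx

lemma key_identity (T : Set (List ℕ)) {x : L1S × L1S} (hx : x ∈ Wspace T) (t : List ℕ) :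
    x.1 t - x.2 t = 2 * ∑' n : ℕ, x.1 (t ++ [n]) := by
  set φ : (L1S × L1S) →L[ℝ] ℝ :=
    (evalCLM t).comp (ContinuousLinearMap.fst ℝ L1S L1S)
      - (evalCLM t).comp (ContinuousLinearMap.snd ℝ L1S L1S)
      - (2 : ℝ) • (childCLM t).comp (ContinuousLinearMap.fst ℝ L1S L1S) with hφ
  have hv : φ x = 0 := by
    refine vanish_on_W T φ (fun s _ => ?_) x hx
    simp only [hφ, ContinuousLinearMap.sub_apply, ContinuousLinearMap.smul_apply,
      ContinuousLinearMap.comp_apply, ContinuousLinearMap.coe_fst',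
      ContinuousLinearMap.coe_snd', evalCLM_apply, childCLM_apply]
    have := gen_identity s t
    simp only [smul_eq_mul]
    linarith
  simp only [hφ, ContinuousLinearMap.sub_apply, ContinuousLinearMap.smul_apply,
    ContinuousLinearMap.comp_apply, ContinuousLinearMap.coe_fst',
    ContinuousLinearMap.coe_snd', evalCLM_apply, childCLM_apply, smul_eq_mul] at hv
  linarith

lemma key_support (T : Set (List ℕ)) (hT : ∀ s ∈ T, ∀ t : List ℕ, t <+: s → t ∈ T)
    {x : L1S × L1S} (hx : x ∈ Wspace T) {t : List ℕ} (ht : t ∉ T) : x.1 t = 0 := by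
  have hv := vanish_on_W T ((evalCLM t).comp (ContinuousLinearMap.fst ℝ L1S L1S))
    (fun s hs => by
      simp only [ContinuousLinearMap.comp_apply, ContinuousLinearMap.coe_fst', evalCLM_apply]
      rw [aVec_apply, if_neg]
      exact fun h => ht (hT s hs t h)) x hx
  simpa using hv

noncomputable def branchChain (P : List ℕ → Prop) (step : ∀ t, P t → ∃ n : ℕ, P (t ++ [n]))
    (t₀ : List ℕ) (h₀ : P t₀) : ℕ → {t : List ℕ // P t}
  | 0 => ⟨t₀, h₀⟩
  | n + 1 =>
    let p := branchChain P step t₀ h₀ n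
    ⟨p.1 ++ [Classical.choose (step p.1 p.2)], Classical.choose_spec (step p.1 p.2)⟩

lemma branchChain_length (P step t₀ h₀) (n : ℕ) :
    ((branchChain P step t₀ h₀ n).1).length = t₀.length + n := by
  induction n with
  | zero => simp [branchChain]
  | succ n ih => simp [branchChain, ih]; ring

lemma branchChain_prefix (P step t₀ h₀) (n : ℕ) :
    (branchChain P step t₀ h₀ n).1 <+: (branchChain P step t₀ h₀ (n + 1)).1 := by
  simp only [branchChain]
  exact List.prefix_append _ _

lemma take_eq_of_prefix {u v : List ℕ} (h : u <+: v) {n : ℕ} (hn : n ≤ u.length) :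
    v.take n = u.take n := by
  obtain ⟨d, rfl⟩ := h
  rw [List.take_append_of_le_length hn]

lemma branch_works (P step t₀ h₀) :
    ∀ n : ℕ, (List.range n).map
      (fun k => ((branchChain P step t₀ h₀ (k + 1)).1).getD k 0)
      = ((branchChain P step t₀ h₀ n).1).take n := by
  intro n
  induction n with
  | zero => simp
  | succ n ih =>
    have hlen : n < ((branchChain P step t₀ h₀ (n + 1)).1).length := by
      rw [branchChain_length]; omega
    rw [List.range_succ, List.map_append, ih, List.map_singleton]
    have h1 : ((branchChain P step t₀ h₀ (n+1)).1).take (n+1)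
        = ((branchChain P step t₀ h₀ (n+1)).1).take n
          ++ [((branchChain P step t₀ h₀ (n+1)).1)[n]] := by
      rw [List.take_succ]
      congr 1
      rw [List.getElem?_eq_getElem hlen]
      rfl
    rw [h1, take_eq_of_prefix (branchChain_prefix P step t₀ h₀ n) (by rw [branchChain_length]; omega),
      List.getD_eq_getElem _ _ hlen]

lemma hard_direction (T : Set (List ℕ)) (hT : ∀ s ∈ T, ∀ t : List ℕ, t <+: s → t ∈ T)
    {x : L1S × L1S} (hx : x ∈ Wspace T) (hx2 : x.2 = 0) (hx0 : x ≠ 0) :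
    ∃ α : ℕ → ℕ, ∀ n : ℕ, (List.range n).map α ∈ T := by
  have step : ∀ t : List ℕ, x.1 t ≠ 0 → ∃ n : ℕ, x.1 (t ++ [n]) ≠ 0 := by
    intro t ht
    by_contra h
    push_neg at h
    have := key_identity T hx t
    rw [hx2] at this
    simp only [lp.coeFn_zero, Pi.zero_apply, sub_zero] at this
    rw [tsum_congr h, tsum_zero] at this
    simp at this
    exact ht this
  have h0 : ∃ t₀ : List ℕ, x.1 t₀ ≠ 0 := by
    by_contra h
    push_neg at h
    apply hx0
    have h1 : x.1 = 0 := by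
      ext t
      simpa using h t
    exact Prod.ext h1 hx2
  obtain ⟨t₀, h₀⟩ := h0
  set P : List ℕ → Prop := fun t => x.1 t ≠ 0 with hP
  refine ⟨fun k => ((branchChain P step t₀ h₀ (k + 1)).1).getD k 0, fun n => ?_⟩
  rw [branch_works P step t₀ h₀ n]
  have hmem : (branchChain P step t₀ h₀ n).1 ∈ T := by
    by_contra h
    exact (branchChain P step t₀ h₀ n).2 (key_support T hT hx h)
  exact hT _ hmem _ (List.take_prefix _ _)

lemma norm_deltaVec (t : List ℕ) : ‖deltaVec t‖ = 1 := by
  have := lp.norm_single (p := 1) (E := fun _ : List ℕ => ℝ) (by norm_num) t (1 : ℝ)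
  simpa [deltaVec] using this

lemma norm_bVec (s : List ℕ) : ‖bVec s‖ = (2 : ℝ) ^ (-(s.length : ℤ)) := by
  rw [bVec, norm_smul, norm_deltaVec, mul_one]
  simp [abs_of_pos]

lemma prefix_snoc_iff {u s : List ℕ} {m : ℕ} :
    u <+: s ++ [m] ↔ u <+: s ∨ u = s ++ [m] := by
  constructor
  · intro h
    by_cases hl : u.length ≤ s.length
    · exact Or.inl (List.prefix_of_prefix_length_le h (List.prefix_append s [m]) hl)
    · right
      refine h.eq_of_length ?_
      have := h.length_le
      simp only [List.length_append, List.length_singleton] at this ⊢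
      omega
  · rintro (h | rfl)
    · exact h.trans (List.prefix_append s [m])
    · exact List.prefix_rfl

lemma aVec_snoc (s : List ℕ) (m : ℕ) :
    aVec (s ++ [m]) = aVec s + (2 : ℝ) ^ (-(s.length + 1 : ℤ)) • deltaVec (s ++ [m]) := by
  apply lp.ext
  funext u
  rw [lp.coeFn_add, Pi.add_apply, lp.coeFn_smul, Pi.smul_apply, aVec_apply, aVec_apply,
    deltaVec_apply, smul_eq_mul]
  by_cases h1 : u <+: s
  · have h2 : u <+: s ++ [m] := h1.trans (List.prefix_append s [m])
    have h3 : u ≠ s ++ [m] := by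
      intro h
      have := h1.length_le
      rw [h] at this
      simp at this
    rw [if_pos h2, if_pos h1, if_neg h3]
    ring
  · by_cases h2 : u = s ++ [m]
    · subst h2
      rw [if_pos List.prefix_rfl, if_neg h1, if_pos rfl]
      simp
    · rw [if_neg, if_neg h1, if_neg h2]
      · ring
      · rw [prefix_snoc_iff]
        tauto

lemma easy_direction (T : Set (List ℕ)) {α : ℕ → ℕ} (hα : ∀ n : ℕ, (List.range n).map α ∈ T) :
    ∃ x : L1S × L1S, x ∈ Wspace T ∧ x.2 = 0 ∧ x ≠ 0 := by
  set sn : ℕ → List ℕ := fun n => (List.range n).map α with hsn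
  have hlen : ∀ n, (sn n).length = n := by intro n; simp [hsn]
  have hsucc : ∀ n, sn (n + 1) = sn n ++ [α n] := by
    intro n
    simp [hsn, List.range_succ]
  set y : ℕ → L1S × L1S := fun n => (aVec (sn n), bVec (sn n)) with hy
  have hbound : ∀ n, ‖y n - y (n + 1)‖ ≤ 3 * (1 / 2 : ℝ) ^ n := by
    intro n
    have hnorm1 : ‖aVec (sn n) - aVec (sn (n + 1))‖ ≤ (1 / 2 : ℝ) ^ n := by
      rw [hsucc n, aVec_snoc (sn n) (α n)]
      have : aVec (sn n) - (aVec (sn n) + (2 : ℝ) ^ (-((sn n).length : ℤ) - 1) •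
          deltaVec (sn n ++ [α n])) = -((2 : ℝ) ^ (-((sn n).length : ℤ) - 1) •
          deltaVec (sn n ++ [α n])) := by abel
      rw [show (-( (sn n).length + 1 : ℤ)) = (-((sn n).length : ℤ) - 1) by ring, this,
        norm_neg, norm_smul, norm_deltaVec, mul_one, hlen]
      rw [Real.norm_eq_abs, abs_of_pos (by positivity)]
      rw [show (-(n:ℤ) - 1) = -((n:ℤ)+1) by ring, zpow_neg, one_div, inv_pow, ← zpow_natCast]
      rw [inv_le_inv₀ (by positivity) (by positivity)]
      apply zpow_le_zpow_right₀ (by norm_num)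
      omega
    have hnorm2 : ‖bVec (sn n) - bVec (sn (n + 1))‖ ≤ 2 * (1 / 2 : ℝ) ^ n := by
      have h1 : ‖bVec (sn n)‖ = (1 / 2 : ℝ) ^ n := by
        rw [norm_bVec, hlen, one_div, inv_pow, ← zpow_natCast, zpow_neg]
      have h2 : ‖bVec (sn (n + 1))‖ = (1 / 2 : ℝ) ^ (n + 1) := by
        rw [norm_bVec, hlen, one_div, inv_pow, ← zpow_natCast, zpow_neg]
      calc ‖bVec (sn n) - bVec (sn (n + 1))‖ ≤ ‖bVec (sn n)‖ + ‖bVec (sn (n + 1))‖ :=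
            norm_sub_le _ _
        _ = (1 / 2 : ℝ) ^ n + (1 / 2 : ℝ) ^ (n + 1) := by rw [h1, h2]
        _ ≤ 2 * (1 / 2 : ℝ) ^ n := by
            rw [pow_succ]
            nlinarith [pow_pos (by norm_num : (0:ℝ) < 1/2) n]
    have : ‖y n - y (n + 1)‖ = max ‖aVec (sn n) - aVec (sn (n + 1))‖
        ‖bVec (sn n) - bVec (sn (n + 1))‖ := by
      rw [hy]
      rfl
    rw [this]
    apply max_le
    · nlinarith [pow_pos (by norm_num : (0:ℝ) < 1/2) n]
    · nlinarith [pow_pos (by norm_num : (0:ℝ) < 1/2) n]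
  have hcauchy : CauchySeq y :=
    cauchySeq_of_le_geometric (1/2) 3 (by norm_num) (by
      intro n
      rw [dist_eq_norm]
      exact hbound n)
  obtain ⟨x, hx⟩ := cauchySeq_tendsto_of_complete hcauchy
  have hyW : ∀ n, y n ∈ Wspace T := fun n =>
    subset_closure (Submodule.subset_span ⟨sn n, hα n, rfl⟩)
  have hxW : x ∈ Wspace T := by
    have : IsClosed (Wspace T) := isClosed_closure
    exact this.mem_of_tendsto hx (Filter.Eventually.of_forall hyW)
  have hx2 : x.2 = 0 := by
    have h1 : Filter.Tendsto (fun n => (y n).2) Filter.atTop (nhds x.2) :=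
      (continuous_snd.tendsto x).comp hx
    have h2 : Filter.Tendsto (fun n => (y n).2) Filter.atTop (nhds 0) := by
      rw [tendsto_zero_iff_norm_tendsto_zero]
      have heq : (fun n => ‖(y n).2‖) = fun n => (1 / 2 : ℝ) ^ n := by
        funext n
        show ‖bVec (sn n)‖ = _
        rw [norm_bVec, hlen, one_div, inv_pow, ← zpow_natCast, zpow_neg]
      rw [heq]
      exact tendsto_pow_atTop_nhds_zero_of_lt_one (by norm_num) (by norm_num)
    exact tendsto_nhds_unique h1 h2
  refine ⟨x, hxW, hx2, ?_⟩
  have hx1 : x.1 [] = 1 := by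
    have h1 : Filter.Tendsto (fun n => evalCLM [] (y n).1) Filter.atTop (nhds (evalCLM [] x.1)) :=
      ((evalCLM []).continuous.tendsto x.1).comp ((continuous_fst.tendsto x).comp hx)
    have h2 : ∀ n, evalCLM [] (y n).1 = 1 := by
      intro n
      show (aVec (sn n)) [] = 1
      rw [aVec_apply, if_pos (List.nil_prefix)]
      simp
    simp only [h2] at h1
    have := tendsto_nhds_unique h1 tendsto_const_nhds
    simpa using this
  intro h
  rw [h] at hx1
  simp at hx1

/-- `W_T ∩ (ℓ¹ ⊕ {0}) ≠ {0}` iff the tree `T` is ill-founded, i.e. has an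
infinite branch. -/
theorem Wspace_inter_nontrivial_iff_illFounded
    (T : Set (List ℕ)) (hT : ∀ s ∈ T, ∀ t : List ℕ, t <+: s → t ∈ T) :
    (∃ x : (lp (fun _ : List ℕ => ℝ) 1) × (lp (fun _ : List ℕ => ℝ) 1),
        x ∈ Wspace T ∧ x.2 = 0 ∧ x ≠ 0) ↔
      ∃ α : ℕ → ℕ, ∀ n : ℕ, (List.range n).map α ∈ T := by
  constructor
  · rintro ⟨x, hxW, hx2, hx0⟩
    exact hard_direction T hT hxW hx2 hx0
  · rintro ⟨α, hα⟩
    exact easy_direction T hα
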